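/- Let X be a complex Hilbert space and let M₁, M₂ be closed subspaces of X with M₁ ∩ M₂ = {0} and M₁^⊥ ∩ M₂^⊥ = {0}. Let P₁, P₂ denote the orthogonal projections onto M₁, M₂, and let T = P₂P₁. If (I − P₂)(M₁^⊥) is contained in the range of I − T, i.e., for every x ∈ X there exists y ∈ X with (I − P₂)((I − P₁)x − P₁y) = (I − P₁)y, then M₁ + M₂ = X (in particular M₁ + M₂ is closed). -/

import Mathlib

open Filter Topology

/-- The orthogonal projection onto a subspace, as an endomorphism. -/
noncomputable def projOnto {X : Type*} [NormedAddCommGroup X] [InnerProductSpace ℂ X]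
    (K : Submodule ℂ X) [K.HasOrthogonalProjection] : X →L[ℂ] X :=
  K.subtypeL.comp K.orthogonalProjectionOnto

lemma projOnto_mem {X : Type*} [NormedAddCommGroup X] [InnerProductSpace ℂ X]
    (K : Submodule ℂ X) [K.HasOrthogonalProjection] (v : X) : projOnto K v ∈ K :=
  (K.orthogonalProjectionOnto v).2

lemma sub_projOnto_mem_orthogonal {X : Type*} [NormedAddCommGroup X] [InnerProductSpace ℂ X]
    (K : Submodule ℂ X) [K.HasOrthogonalProjection] (v : X) : v - projOnto K v ∈ Kᗮ :=
  K.sub_starProjection_mem_orthogonal v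

/-- **A two-subspace rigidity statement.** If `M₁ ∩ M₂ = {0}`, `M₁^⊥ ∩ M₂^⊥ = {0}` and
`(I - P₂)(M₁^⊥) ⊆ Ran(I - T)` for `T = P₂ P₁`, i.e. for every `x` there is `y` with
`(I - P₂)((I - P₁)x - P₁ y) = (I - P₁) y`, then `M₁ + M₂ = X`. -/
theorem two_subspaces_sum_eq_top
    {X : Type*} [NormedAddCommGroup X] [InnerProductSpace ℂ X] [CompleteSpace X]
    (M₁ M₂ : Submodule ℂ X) [CompleteSpace M₁] [CompleteSpace M₂]
    (h1 : M₁ ⊓ M₂ = ⊥) (h2 : M₁ᗮ ⊓ M₂ᗮ = ⊥)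
    (h : ∀ x : X, ∃ y : X,
      ((x - projOnto M₁ x) - projOnto M₁ y) -
          projOnto M₂ ((x - projOnto M₁ x) - projOnto M₁ y) =
        y - projOnto M₁ y) :
    M₁ ⊔ M₂ = ⊤ := by
  rw [eq_top_iff]
  intro x _
  obtain ⟨y, hy⟩ := h x
  set u : X := (x - projOnto M₁ x) - projOnto M₁ y with hu
  -- the common value is in M₁ᗮ ⊓ M₂ᗮ = ⊥, hence 0
  have hmem : y - projOnto M₁ y ∈ M₁ᗮ ⊓ M₂ᗮ := by
    refine ⟨sub_projOnto_mem_orthogonal M₁ y, ?_⟩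
    rw [← hy]
    exact sub_projOnto_mem_orthogonal M₂ u
  rw [h2, Submodule.mem_bot] at hmem
  have hyM1 : y ∈ M₁ := by
    have : y = projOnto M₁ y := by
      exact sub_eq_zero.mp hmem
    rw [this]; exact projOnto_mem M₁ y
  have huM2 : u ∈ M₂ := by
    have h0 : u - projOnto M₂ u = 0 := by rw [hy, hmem]
    have : u = projOnto M₂ u := by
      have := sub_eq_zero.mp h0; exact this
    rw [this]; exact projOnto_mem M₂ u
  have hx : x = (projOnto M₁ x + projOnto M₁ y) + u := by
    rw [hu]; abel
  rw [hx]
  exact Submodule.add_mem_sup (M₁.add_mem (projOnto_mem M₁ x) (projOnto_mem M₁ y)) huM2
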